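/- Let Δ > 0 and ε > 0. For a ∈ ℝ let μ_a be the measure on ℝ with density x ↦ (ε/(2Δ))·exp(−ε·|x − a|/Δ) with respect to Lebesgue measure (the Laplace distribution with location a and scale Δ/ε). Then for all a, a′ ∈ ℝ with |a − a′| ≤ Δ and every Borel measurable set S ⊆ ℝ, μ_a(S) ≤ exp(ε)·μ_{a′}(S). -/
import Mathlib


open MeasureTheory

/-- The measure on `ℝ` of the Laplace distribution with location `a` and scale `Δ/ε`:
its density with respect to Lebesgue measure is `x ↦ (ε/(2Δ)) exp (-ε |x - a| / Δ)`. -/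
noncomputable def laplaceMeasure (Δ ε a : ℝ) : Measure ℝ :=
  volume.withDensity fun x => ENNReal.ofReal ((ε / (2 * Δ)) * Real.exp (-(ε * |x - a|) / Δ))

/-- ε-differential privacy of the Laplace mechanism: if `|a - a'| ≤ Δ` then for every
Borel set `S`, the Laplace measure centred at `a` assigns `S` at most `exp ε` times
the mass assigned by the Laplace measure centred at `a'`. -/
theorem laplace_mechanism_dp (Δ ε : ℝ) (hΔ : 0 < Δ) (hε : 0 < ε)
    (a a' : ℝ) (ha : |a - a'| ≤ Δ) (S : Set ℝ) (hS : MeasurableSet S) :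
    laplaceMeasure Δ ε a S ≤ ENNReal.ofReal (Real.exp ε) * laplaceMeasure Δ ε a' S := by
  unfold laplaceMeasure
  rw [withDensity_apply _ hS, withDensity_apply _ hS, ← lintegral_const_mul']
  · refine lintegral_mono fun x => ?_
    rw [← ENNReal.ofReal_mul (Real.exp_nonneg _)]
    refine ENNReal.ofReal_le_ofReal ?_
    rw [mul_comm (Real.exp ε), mul_assoc, ← Real.exp_add]
    refine mul_le_mul_of_nonneg_left (Real.exp_le_exp.2 ?_)
      (div_nonneg hε.le (by linarith))
    rw [div_add' _ _ _ hΔ.ne']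
    rw [div_le_div_iff_of_pos_right hΔ]
    have h1 : |x - a| ≥ |x - a'| - |a - a'| := by
      have := abs_sub_abs_le_abs_sub (x - a') (x - a)
      have : |(x - a') - (x - a)| = |a - a'| := by
        rw [show (x - a') - (x - a) = a - a' by ring]
      linarith [abs_sub_abs_le_abs_sub (x - a') (x - a), this.symm ▸ abs_sub_abs_le_abs_sub (x - a') (x - a)]
    nlinarith [abs_nonneg (x - a'), abs_nonneg (x - a)]
  · exact ENNReal.ofReal_ne_top
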